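/- arXiv:1607.00999 — 2 statements merged into one kernel-verified Lean document; each statement's English description precedes it below -/
import Mathlib

section
/- Let (Z_n) be the branching process associated to a nearest-neighbor random walk (S_n) on Z started at 0, defined by Z_0 = 1 and Z_n = #{k in {1,...,τ(-1)} : S_{k-1} = n-1 and S_k = n} for n ≥ 1, where τ(-1) is the first hitting time of -1. Then, on the event that τ(-1) is finite, τ(-1) = 2·(Σ_{j=0}^∞ Z_j) - 1. -/
open Finset

/-- Deterministic path identity: for a nearest-neighbor walk `S` on `ℤ` started at `0`,
with `τ := inf {n ≥ 1 : S n = -1}` finite, the associated branching process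
`Z 0 = 1`, `Z n = #{k ∈ {1,…,τ} : S (k-1) = n-1 ∧ S k = n}` satisfies
`τ = 2 (Σ_j Z j) - 1`. -/
theorem stmt0 (S : ℕ → ℤ) (hS0 : S 0 = 0)
    (hstep : ∀ n : ℕ, S (n + 1) - S n = 1 ∨ S (n + 1) - S n = -1)
    (hhit : ∃ n : ℕ, 1 ≤ n ∧ S n = -1)
    (τ : ℕ) (hτ : τ = sInf {n : ℕ | 1 ≤ n ∧ S n = -1})
    (Z : ℕ → ℕ) (hZ0 : Z 0 = 1)
    (hZ : ∀ n : ℕ, 1 ≤ n →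
      Z n = ((Finset.Icc 1 τ).filter
        (fun k => S (k - 1) = (n : ℤ) - 1 ∧ S k = (n : ℤ))).card) :
    (τ : ℤ) = 2 * (∑' j : ℕ, (Z j : ℤ)) - 1 := by
  have hτmem : 1 ≤ τ ∧ S τ = -1 := by
    rw [hτ]; exact Nat.sInf_mem hhit
  have hmin : ∀ n, 1 ≤ n → n < τ → S n ≠ -1 := by
    intro n h1 hn hSn
    have : τ ≤ n := hτ ▸ Nat.sInf_le ⟨h1, hSn⟩
    omega
  have hle : ∀ j : ℕ, S j ≤ j := by
    intro j; induction j with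
    | zero => simp [hS0]
    | succ n ih => rcases hstep n with h | h <;> push_cast <;> omega
  have hnn : ∀ k, k < τ → 0 ≤ S k := by
    intro k hk
    induction k with
    | zero => simp [hS0]
    | succ n ih =>
      have hn : 0 ≤ S n := ih (by omega)
      have := hmin (n+1) (by omega) hk
      rcases hstep n with h | h <;> omega
  classical
  set u : Finset ℕ := (Icc 1 τ).filter (fun k => S k - S (k-1) = 1) with hu
  set d : Finset ℕ := (Icc 1 τ).filter (fun k => S k - S (k-1) = -1) with hd
  -- each k in Icc 1 τ is an up or down step
  have hstep' : ∀ k ∈ Icc 1 τ, S k - S (k-1) = 1 ∨ S k - S (k-1) = -1 := by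
    intro k hk
    simp only [mem_Icc] at hk
    have : k - 1 + 1 = k := by omega
    rcases hstep (k-1) with h | h <;> rw [this] at h
    · exact Or.inl h
    · exact Or.inr h
  have hcard : u.card + d.card = τ := by
    have hdn : d = (Icc 1 τ).filter (fun k => ¬ (S k - S (k-1) = 1)) := by
      ext k
      simp only [hd, mem_filter, and_congr_right_iff]
      intro hk
      rcases hstep' k hk with h | h <;> constructor <;> intro h2 <;> omega
    rw [hdn, Finset.card_filter_add_card_filter_not, Nat.card_Icc]
    omega
  -- telescoping sum
  have htel : ∑ k ∈ Icc 1 τ, (S k - S (k-1)) = -1 := by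
    have h1 : Icc 1 τ = Ico 1 (τ+1) := by rw [Finset.Ico_add_one_right_eq_Icc]
    rw [h1, Finset.sum_Ico_eq_sum_range]
    have h2 : ∀ i ∈ Finset.range (τ+1-1), S (1+i) - S (1+i-1) = S (i+1) - S i := by
      intro i _
      congr 2 <;> omega
    rw [Finset.sum_congr rfl h2, Finset.sum_range_sub]
    have : τ + 1 - 1 = τ := by omega
    rw [this, hτmem.2, hS0]; ring
  have hUD : (u.card : ℤ) - d.card = -1 := by
    have := Finset.sum_filter_add_sum_filter_not (Icc 1 τ)
      (fun k => S k - S (k-1) = 1) (fun k => S k - S (k-1))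
    rw [htel] at this
    have hsu : ∑ k ∈ u, (S k - S (k-1)) = u.card := by
      rw [Finset.sum_congr rfl (fun k hk => (Finset.mem_filter.mp hk).2)]
      simp [hu]
    have hsd : ∑ k ∈ (Icc 1 τ).filter (fun k => ¬ S k - S (k-1) = 1),
        (S k - S (k-1)) = -(d.card : ℤ) := by
      have hdn : (Icc 1 τ).filter (fun k => ¬ (S k - S (k-1) = 1)) = d := by
        ext k
        simp only [hd, mem_filter, and_congr_right_iff]
        intro hk
        rcases hstep' k hk with h | h <;> constructor <;> intro h2 <;> omega
      rw [hdn, Finset.sum_congr rfl (fun k hk => (Finset.mem_filter.mp hk).2)]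
      simp [hd]
    rw [hsu, hsd] at this
    omega
  -- sum of Z over Icc 1 τ equals number of up steps
  have hZsum : ∑ n ∈ Icc 1 τ, Z n = u.card := by
    have hc : ∀ n ∈ Icc 1 τ, Z n = ((Icc 1 τ).filter
        (fun k => S (k - 1) = (n : ℤ) - 1 ∧ S k = (n : ℤ))).card := by
      intro n hn
      exact hZ n (Finset.mem_Icc.mp hn).1
    rw [Finset.sum_congr rfl hc, ← Finset.card_biUnion]
    · congr 1
      ext k
      simp only [mem_biUnion, mem_filter, mem_Icc, hu]
      constructor
      · rintro ⟨n, ⟨hn1, _⟩, hk, h1, h2⟩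
        refine ⟨hk, by omega⟩
      · rintro ⟨hk, hsk⟩
        have hk1 : k - 1 < τ := by omega
        have h0 : 0 ≤ S (k-1) := hnn _ hk1
        have hSk : 1 ≤ S k := by omega
        have hSkle : S k ≤ (k : ℤ) := hle k
        refine ⟨(S k).toNat, ⟨?_, ?_⟩, ⟨hk, ?_, ?_⟩⟩
        · omega
        · omega
        · push_cast [Int.toNat_of_nonneg (by omega : (0:ℤ) ≤ S k)]; omega
        · push_cast [Int.toNat_of_nonneg (by omega : (0:ℤ) ≤ S k)]; rfl
    · intro a _ b _ hab
      rw [Function.onFun, Finset.disjoint_left]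
      intro k hka hkb
      simp only [mem_filter] at hka hkb
      exact hab (by exact_mod_cast hka.2.2.symm.trans hkb.2.2)
  -- Z vanishes beyond τ
  have hZvanish : ∀ n ∉ Finset.range (τ+1), (Z n : ℤ) = 0 := by
    intro n hn
    simp only [Finset.mem_range, not_lt] at hn
    rw [hZ n (by omega), Nat.cast_eq_zero]
    rw [Finset.card_eq_zero, Finset.filter_eq_empty_iff]
    intro k hk
    simp only [mem_Icc] at hk
    have h1 := hle (k-1)
    rintro ⟨ha, _⟩
    omega
  rw [tsum_eq_sum hZvanish]
  have hsplit : Finset.range (τ+1) = insert 0 (Icc 1 τ) := by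
    ext k
    simp only [Finset.mem_range, Finset.mem_insert, mem_Icc]
    omega
  rw [hsplit, Finset.sum_insert (by simp)]
  have : ∑ n ∈ Icc 1 τ, (Z n : ℤ) = (u.card : ℤ) := by
    rw [← Nat.cast_sum, hZsum]
  rw [this, hZ0]
  push_cast
  omega
end

section
/- For the quenched expected exit time bound: if g < h < i are integers and V is the potential of the environment, then E_ω^h[τ(g) ∧ τ(i)] ≤ Σ_{k=h}^{i−1} Σ_{l=g}^{k} (1 + e^{V(l)−V(l−1)}) e^{V(k)−V(l)}, and consequently E_ω^h[τ(g) ∧ τ(i)] ≤ 2(i−g+1)² exp(2·max_{g−1 ≤ l ≤ k ≤ i−1}(V(k) − V(l))). -/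
open MeasureTheory Finset Real

open scoped ENNReal NNReal

/-- First exit time of `(g, i)` (strictly after time 0), as an `ℝ≥0∞`-valued time
(`∞` if the walk never exits); this is `τ(g) ∧ τ(i)`. -/
noncomputable def exitTime (g i : ℤ) (S : ℕ → ℤ) : ENNReal :=
  ⨅ (n : ℕ) (_ : 1 ≤ n ∧ (S n = g ∨ S n = i)), (n : ENNReal)

namespace Stmt18Aux


def esc (g i : ℤ) (n : ℕ) : Set (ℕ → ℤ) :=
  {S | ∀ m : ℕ, 1 ≤ m → m ≤ n → S m ≠ g ∧ S m ≠ i}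

lemma coord_measurable (n : ℕ) (x : ℤ) : MeasurableSet {S : ℕ → ℤ | S n = x} := by
  have hm : Measurable (fun S : ℕ → ℤ => S n) := measurable_pi_apply n
  exact hm (measurableSet_singleton x)

lemma esc_measurable (g i : ℤ) (n : ℕ) : MeasurableSet (esc g i n) := by
  have : esc g i n = ⋂ (m : ℕ) (_ : 1 ≤ m ∧ m ≤ n),
      ({S : ℕ → ℤ | S m = g}ᶜ ∩ {S : ℕ → ℤ | S m = i}ᶜ) := by
    ext S; simp [esc, Set.mem_iInter, and_imp]
  rw [this]
  exact MeasurableSet.iInter fun m => MeasurableSet.iInter fun _ =>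
    ((coord_measurable m g).compl).inter ((coord_measurable m i).compl)

lemma esc_anti (g i : ℤ) {m n : ℕ} (hmn : m ≤ n) : esc g i n ⊆ esc g i m :=
  fun S hS k h1 h2 => hS k h1 (h2.trans hmn)

lemma lt_exitTime_iff (g i : ℤ) (S : ℕ → ℤ) (n : ℕ) :
    (n : ℝ≥0∞) < exitTime g i S ↔ S ∈ esc g i n := by
  constructor
  · intro hlt m h1 h2
    constructor <;> intro hm
    · have : exitTime g i S ≤ m := iInf₂_le m ⟨h1, Or.inl hm⟩
      exact absurd (this.trans_lt (by exact_mod_cast lt_of_le_of_lt (Nat.cast_le.2 h2) hlt)) (lt_irrefl _)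
    · have : exitTime g i S ≤ m := iInf₂_le m ⟨h1, Or.inr hm⟩
      exact absurd (this.trans_lt (by exact_mod_cast lt_of_le_of_lt (Nat.cast_le.2 h2) hlt)) (lt_irrefl _)
  · intro hS
    have : ((n+1 : ℕ) : ℝ≥0∞) ≤ exitTime g i S := by
      refine le_iInf₂ fun m hm => ?_
      have : n + 1 ≤ m := by
        by_contra hc
        push_neg at hc
        have := hS m hm.1 (by omega)
        rcases hm.2 with h | h
        · exact this.1 h
        · exact this.2 h
      exact_mod_cast this
    calc (n : ℝ≥0∞) < ((n+1:ℕ) : ℝ≥0∞) := by exact_mod_cast Nat.lt_succ_self n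
    _ ≤ _ := this

lemma exitTime_le_tsum (g i : ℤ) (S : ℕ → ℤ) :
    exitTime g i S ≤ ∑' m : ℕ, (esc g i m).indicator (fun _ => (1 : ℝ≥0∞)) S := by
  by_cases hhit : ∃ n : ℕ, 1 ≤ n ∧ (S n = g ∨ S n = i)
  · set n := Nat.find hhit with hn
    have hspec := Nat.find_spec hhit
    have h1 : exitTime g i S ≤ n := iInf₂_le n hspec
    have h2 : ∀ m < n, S ∈ esc g i m := by
      intro m hm k hk1 hk2 
      have : ¬ (1 ≤ k ∧ (S k = g ∨ S k = i)) := Nat.find_min hhit (lt_of_le_of_lt hk2 hm)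
      constructor <;> intro h <;> exact this ⟨hk1, by tauto⟩
    calc exitTime g i S ≤ n := h1
    _ = ∑ m ∈ Finset.range n, (1:ℝ≥0∞) := by simp
    _ = ∑ m ∈ Finset.range n, (esc g i m).indicator (fun _ => (1 : ℝ≥0∞)) S := by
        refine Finset.sum_congr rfl fun m hm => ?_
        rw [Set.indicator_of_mem (h2 m (Finset.mem_range.1 hm))]
    _ ≤ _ := ENNReal.sum_le_tsum _
  · have hall : ∀ m, S ∈ esc g i m := by
      intro m k hk1 hk2
      constructor <;> intro h <;> exact hhit ⟨k, hk1, by tauto⟩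
    have : ∑' m : ℕ, (esc g i m).indicator (fun _ => (1 : ℝ≥0∞)) S = ∑' _ : ℕ, (1:ℝ≥0∞) := by
      congr 1; ext m; rw [Set.indicator_of_mem (hall m)]
    rw [this, ENNReal.tsum_const_eq_top_of_ne_zero (by simp)]
    exact le_top


noncomputable def c (V : ℤ → ℝ) (l k : ℤ) : ℝ :=
  (1 + Real.exp (V l - V (l - 1))) * Real.exp (V k - V l)

noncomputable def f (V : ℤ → ℝ) (g i x : ℤ) : ℝ :=
  ∑ k ∈ Finset.Icc x (i - 1), ∑ l ∈ Finset.Icc g k, c V l k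

lemma c_nonneg (V : ℤ → ℝ) (l k : ℤ) : 0 ≤ c V l k := by
  unfold c; positivity

lemma f_nonneg (V : ℤ → ℝ) (g i x : ℤ) : 0 ≤ f V g i x :=
  Finset.sum_nonneg fun k _ => Finset.sum_nonneg fun l _ => c_nonneg V l k

lemma f_identity (ω : ℤ → ℝ) (hω : ∀ j, ω j ∈ Set.Ioo (0:ℝ) 1) (V : ℤ → ℝ)
    (hV : ∀ k : ℤ, V k - V (k - 1) = Real.log ((1 - ω k) / ω k))
    (g i x : ℤ) (hgx : g < x) (hxi : x < i) :
    ω x * f V g i (x+1) + (1 - ω x) * f V g i (x-1) + 1 = f V g i x := by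
  obtain ⟨hω0, hω1⟩ := hω x
  have hne : ω x ≠ 0 := ne_of_gt hω0
  have hexp : ∀ y : ℤ, Real.exp (V y - V (y - 1)) = (1 - ω y) / ω y := fun y => by
    rw [hV y]; exact Real.exp_log (div_pos (sub_pos.2 (hω y).2) (hω y).1)
  have hins : ∀ a b : ℤ, a ≤ b → Finset.Icc a b = insert a (Finset.Icc (a+1) b) := by
    intro a b hab; ext z; simp only [Finset.mem_Icc, Finset.mem_insert]; omega
  have hnotmem : ∀ a b : ℤ, a ∉ Finset.Icc (a+1) b := by
    intro a b; simp only [Finset.mem_Icc]; omega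
  have hins' : ∀ a b : ℤ, a ≤ b → Finset.Icc a b = insert b (Finset.Icc a (b-1)) := by
    intro a b hab; ext z; simp only [Finset.mem_Icc, Finset.mem_insert]; omega
  have hnotmem' : ∀ a b : ℤ, b ∉ Finset.Icc a (b-1) := by
    intro a b; simp only [Finset.mem_Icc]; omega
  have e1 : f V g i (x-1) = (∑ l ∈ Finset.Icc g (x-1), c V l (x-1)) + f V g i x := by
    unfold f
    rw [hins (x-1) (i-1) (by omega), Finset.sum_insert (hnotmem _ _),
      show x - 1 + 1 = x by ring]
  have e2 : f V g i x = (∑ l ∈ Finset.Icc g x, c V l x) + f V g i (x+1) := by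
    unfold f
    rw [hins x (i-1) (by omega), Finset.sum_insert (hnotmem _ _)]
  have e3 : (∑ l ∈ Finset.Icc g x, c V l x)
      = c V x x + ∑ l ∈ Finset.Icc g (x-1), c V l x := by
    rw [hins' g x (le_of_lt hgx), Finset.sum_insert (hnotmem' _ _)]
  have key1 : ω x * c V x x = 1 := by
    unfold c
    rw [sub_self, Real.exp_zero, hexp x]
    field_simp; ring
  have key2 : ∀ l : ℤ, ω x * c V l x = (1 - ω x) * c V l (x-1) := by
    intro l
    unfold c
    rw [show V x - V l = (V x - V (x-1)) + (V (x-1) - V l) by ring, Real.exp_add, hexp x]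
    field_simp
  have hsum : ω x * (∑ l ∈ Finset.Icc g (x-1), c V l x)
      = (1 - ω x) * (∑ l ∈ Finset.Icc g (x-1), c V l (x-1)) := by
    rw [Finset.mul_sum, Finset.mul_sum]
    exact Finset.sum_congr rfl fun l _ => key2 l
  rw [e1, e2, e3]
  linear_combination -hsum - key1

lemma f_ge_one (ω : ℤ → ℝ) (hω : ∀ j, ω j ∈ Set.Ioo (0:ℝ) 1) (V : ℤ → ℝ)
    (g i x : ℤ) (hgx : g ≤ x) (hxi : x ≤ i - 1) :
    1 ≤ f V g i x := by
  have h1 : (1:ℝ) ≤ c V x x := by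
    unfold c
    rw [sub_self, Real.exp_zero, mul_one]
    nlinarith [Real.exp_pos (V x - V (x-1))]
  have h2 : c V x x ≤ ∑ l ∈ Finset.Icc g x, c V l x :=
    Finset.single_le_sum (fun l _ => c_nonneg V l x) (Finset.mem_Icc.2 ⟨hgx, le_refl x⟩)
  have h3 : (∑ l ∈ Finset.Icc g x, c V l x) ≤ f V g i x :=
    Finset.single_le_sum (f := fun k => ∑ l ∈ Finset.Icc g k, c V l k)
      (fun k _ => Finset.sum_nonneg fun l _ => c_nonneg V l k)
      (Finset.mem_Icc.2 ⟨le_refl x, hxi⟩)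
  linarith

lemma f_le_bound (V : ℤ → ℝ) (g h i : ℤ) (hgh : g < h) (hhi : h < i)
    (M : ℝ) (hM0 : 0 ≤ M)
    (hM : ∀ l k : ℤ, g - 1 ≤ l → l ≤ k → k ≤ i - 1 → V k - V l ≤ M) :
    f V g i h ≤ 2 * ((i:ℝ) - (g:ℝ) + 1) ^ 2 * Real.exp (2 * M) := by
  have hterm : ∀ k ∈ Finset.Icc h (i-1), ∀ l ∈ Finset.Icc g k,
      c V l k ≤ 2 * Real.exp (2 * M) := by
    intro k hk l hl
    rw [Finset.mem_Icc] at hk hl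
    have h1 : Real.exp (V l - V (l - 1)) ≤ Real.exp M :=
      Real.exp_le_exp.2 (hM (l-1) l (by omega) (by omega) (by omega))
    have h2 : Real.exp (V k - V l) ≤ Real.exp M :=
      Real.exp_le_exp.2 (hM l k (by omega) hl.2 hk.2)
    have h3 : (1:ℝ) ≤ Real.exp M := Real.one_le_exp hM0
    have h4 : (0:ℝ) < Real.exp (V k - V l) := Real.exp_pos _
    have : c V l k ≤ (1 + Real.exp M) * Real.exp M := by
      unfold c
      have := Real.exp_pos (V l - V (l-1))
      nlinarith
    calc c V l k ≤ (1 + Real.exp M) * Real.exp M := this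
    _ ≤ (2 * Real.exp M) * Real.exp M := by nlinarith
    _ = 2 * Real.exp (2 * M) := by rw [mul_assoc, ← Real.exp_add]; ring_nf
  have hcard1 : ((Finset.Icc h (i-1)).card : ℝ) ≤ (i:ℝ) - (g:ℝ) + 1 := by
    rw [Int.card_Icc]
    have : (i - 1 + 1 - h).toNat = (i - h).toNat := by norm_num
    rw [this]
    have h2 : ((i - h).toNat : ℤ) = i - h := Int.toNat_of_nonneg (by omega)
    have : ((i - h).toNat : ℝ) = (i:ℝ) - (h:ℝ) := by exact_mod_cast h2
    rw [this]
    have : (g:ℝ) < (h:ℝ) := by exact_mod_cast hgh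
    linarith
  have hcard2 : ∀ k ∈ Finset.Icc h (i-1), ((Finset.Icc g k).card : ℝ) ≤ (i:ℝ) - (g:ℝ) + 1 := by
    intro k hk
    rw [Finset.mem_Icc] at hk
    rw [Int.card_Icc]
    have h2 : ((k + 1 - g).toNat : ℤ) ≤ i - g := by
      rw [Int.toNat_of_nonneg (by omega)]; omega
    have : ((k + 1 - g).toNat : ℝ) ≤ (i:ℝ) - (g:ℝ) := by exact_mod_cast h2
    linarith
  have hpos : (0:ℝ) ≤ (i:ℝ) - (g:ℝ) + 1 := by
    have : (g:ℝ) < (i:ℝ) := by exact_mod_cast lt_trans hgh hhi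
    linarith
  have hexp2 : (0:ℝ) ≤ 2 * Real.exp (2*M) := by positivity
  calc f V g i h ≤ ∑ k ∈ Finset.Icc h (i-1), ((i:ℝ) - (g:ℝ) + 1) * (2 * Real.exp (2*M)) := by
        refine Finset.sum_le_sum fun k hk => ?_
        calc (∑ l ∈ Finset.Icc g k, c V l k) ≤ ∑ l ∈ Finset.Icc g k, 2 * Real.exp (2*M) :=
              Finset.sum_le_sum fun l hl => hterm k hk l hl
        _ = ((Finset.Icc g k).card : ℝ) * (2 * Real.exp (2*M)) := by
              rw [Finset.sum_const, nsmul_eq_mul]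
        _ ≤ _ := by nlinarith [hcard2 k hk]
  _ = ((Finset.Icc h (i-1)).card : ℝ) * (((i:ℝ) - (g:ℝ) + 1) * (2 * Real.exp (2*M))) := by
        rw [Finset.sum_const, nsmul_eq_mul]
  _ ≤ ((i:ℝ) - (g:ℝ) + 1) * (((i:ℝ) - (g:ℝ) + 1) * (2 * Real.exp (2*M))) := by
        exact mul_le_mul_of_nonneg_right hcard1 (by positivity)
  _ = 2 * ((i:ℝ) - (g:ℝ) + 1) ^ 2 * Real.exp (2 * M) := by ring

lemma key (ω : ℤ → ℝ) (hω : ∀ i, ω i ∈ Set.Ioo (0 : ℝ) 1)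
    (μ : ℤ → Measure (ℕ → ℤ)) (hprob : ∀ x, IsProbabilityMeasure (μ x))
    (hstart : ∀ x : ℤ, μ x {S | S 0 = x} = 1)
    (hup : ∀ (x i : ℤ) (n : ℕ) (A : Set (ℕ → ℤ)), MeasurableSet A →
      (∀ S S' : ℕ → ℤ, (∀ m ≤ n, S m = S' m) → (S ∈ A ↔ S' ∈ A)) →
      μ x (A ∩ {S | S n = i ∧ S (n + 1) = i + 1})
        = ENNReal.ofReal (ω i) * μ x (A ∩ {S | S n = i}))
    (hdown : ∀ (x i : ℤ) (n : ℕ) (A : Set (ℕ → ℤ)), MeasurableSet A →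
      (∀ S S' : ℕ → ℤ, (∀ m ≤ n, S m = S' m) → (S ∈ A ↔ S' ∈ A)) →
      μ x (A ∩ {S | S n = i ∧ S (n + 1) = i - 1})
        = ENNReal.ofReal (1 - ω i) * μ x (A ∩ {S | S n = i}))
    (V : ℤ → ℝ)
    (hV : ∀ k : ℤ, V k - V (k - 1) = Real.log ((1 - ω k) / ω k))
    (g h i : ℤ) (hgh : g < h) (hhi : h < i) :
    (∫⁻ S, exitTime g i S ∂(μ h)) ≤ ENNReal.ofReal (f V g i h) := by
  haveI := hprob h
  -- a.e. nearest-neighbor steps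
  have hstepae : ∀ n : ℕ,
      μ h {S : ℕ → ℤ | ¬ (S (n+1) = S n + 1 ∨ S (n+1) = S n - 1)} = 0 := by
    intro n
    have hbady : ∀ y : ℤ, μ h ({S : ℕ → ℤ | S n = y} \
        ({S : ℕ → ℤ | S n = y ∧ S (n+1) = y+1} ∪ {S : ℕ → ℤ | S n = y ∧ S (n+1) = y-1})) = 0 := by
      intro y
      have hupy := hup h y n Set.univ MeasurableSet.univ (fun _ _ _ => Iff.rfl)
      have hdowny := hdown h y n Set.univ MeasurableSet.univ (fun _ _ _ => Iff.rfl)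
      rw [Set.univ_inter, Set.univ_inter] at hupy hdowny
      have hPm : MeasurableSet {S : ℕ → ℤ | S n = y ∧ S (n+1) = y+1} := by
        have he : {S : ℕ → ℤ | S n = y ∧ S (n+1) = y+1}
            = {S : ℕ → ℤ | S n = y} ∩ {S : ℕ → ℤ | S (n+1) = y+1} := rfl
        rw [he]; exact (coord_measurable n y).inter (coord_measurable (n+1) (y+1))
      have hQm : MeasurableSet {S : ℕ → ℤ | S n = y ∧ S (n+1) = y-1} := by
        have he : {S : ℕ → ℤ | S n = y ∧ S (n+1) = y-1}
            = {S : ℕ → ℤ | S n = y} ∩ {S : ℕ → ℤ | S (n+1) = y-1} := rfl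
        rw [he]; exact (coord_measurable n y).inter (coord_measurable (n+1) (y-1))
      have hPQ : {S : ℕ → ℤ | S n = y ∧ S (n+1) = y+1} ∪ {S : ℕ → ℤ | S n = y ∧ S (n+1) = y-1}
          ⊆ {S : ℕ → ℤ | S n = y} := by
        rintro S (hS | hS) <;> exact hS.1
      have hdisj : Disjoint {S : ℕ → ℤ | S n = y ∧ S (n+1) = y+1}
          {S : ℕ → ℤ | S n = y ∧ S (n+1) = y-1} := by
        rw [Set.disjoint_left]
        rintro S ⟨_, h1⟩ ⟨_, h2⟩
        omega
      have h1 := measure_inter_add_diff (μ := μ h) {S : ℕ → ℤ | S n = y} (hPm.union hQm)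
      rw [Set.inter_eq_right.mpr hPQ, measure_union hdisj hQm, hupy, hdowny] at h1
      have h2 : ENNReal.ofReal (ω y) * μ h {S : ℕ → ℤ | S n = y}
          + ENNReal.ofReal (1 - ω y) * μ h {S : ℕ → ℤ | S n = y}
          = μ h {S : ℕ → ℤ | S n = y} := by
        rw [← add_mul, ← ENNReal.ofReal_add (hω y).1.le (by have := (hω y).2; linarith),
          show ω y + (1 - ω y) = 1 by ring, ENNReal.ofReal_one, one_mul]
      rw [h2] at h1
      have h3 : μ h {S : ℕ → ℤ | S n = y} + μ h ({S : ℕ → ℤ | S n = y} \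
          ({S : ℕ → ℤ | S n = y ∧ S (n+1) = y+1} ∪ {S : ℕ → ℤ | S n = y ∧ S (n+1) = y-1}))
          = μ h {S : ℕ → ℤ | S n = y} + 0 := by rw [add_zero]; exact h1
      exact (ENNReal.add_right_inj (measure_ne_top (μ h) _)).mp h3
    refine measure_mono_null ?_ (measure_iUnion_null (s := fun y : ℤ =>
      ({S : ℕ → ℤ | S n = y} \
        ({S : ℕ → ℤ | S n = y ∧ S (n+1) = y+1} ∪ {S : ℕ → ℤ | S n = y ∧ S (n+1) = y-1}))) hbady)
    intro S hS
    refine Set.mem_iUnion.2 ⟨S n, rfl, ?_⟩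
    rintro (⟨_, hc⟩ | ⟨_, hc⟩) <;> exact hS (by tauto)
  -- a.e. start at h
  have hstartae : μ h {S : ℕ → ℤ | ¬ S 0 = h} = 0 := by
    have : {S : ℕ → ℤ | ¬ S 0 = h} = {S : ℕ → ℤ | S 0 = h}ᶜ := rfl
    rw [this, prob_compl_eq_zero_iff (coord_measurable 0 h)]
    exact hstart h
  -- deterministic confinement
  have hdet : ∀ S : ℕ → ℤ, S 0 = h → (∀ n, S (n+1) = S n + 1 ∨ S (n+1) = S n - 1) →
      ∀ n, S ∈ esc g i n → g < S n ∧ S n < i := by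
    intro S h0 hstep n
    induction n with
    | zero => intro _; rw [h0]; exact ⟨hgh, hhi⟩
    | succ n ih =>
      intro hS
      have h1 := ih (esc_anti g i (Nat.le_succ n) hS)
      have h2 := hS (n+1) (by omega) (le_refl _)
      rcases hstep n with hst | hst <;> rw [hst] at h2 ⊢ <;> omega
  -- a.e. confinement
  have hintnull : ∀ n : ℕ,
      μ h {S : ℕ → ℤ | S ∈ esc g i n ∧ ¬ (g < S n ∧ S n < i)} = 0 := by
    intro n
    have hsub : {S : ℕ → ℤ | S ∈ esc g i n ∧ ¬ (g < S n ∧ S n < i)}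
        ⊆ {S : ℕ → ℤ | ¬ S 0 = h} ∪ ⋃ m : ℕ,
          {S : ℕ → ℤ | ¬ (S (m+1) = S m + 1 ∨ S (m+1) = S m - 1)} := by
      intro S hS
      by_cases h0 : S 0 = h
      · by_cases hst : ∀ m : ℕ, S (m+1) = S m + 1 ∨ S (m+1) = S m - 1
        · exact absurd (hdet S h0 hst n hS.1) hS.2
        · push_neg at hst
          obtain ⟨m, hm⟩ := hst
          exact Or.inr (Set.mem_iUnion.2 ⟨m, not_or.2 hm⟩)
      · exact Or.inl h0
    exact measure_mono_null hsub
      (measure_union_null hstartae (measure_iUnion_null hstepae))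
  -- partition by position at time n
  have hpart : ∀ (n : ℕ) (C : Set (ℕ → ℤ)), MeasurableSet C → C ⊆ esc g i n →
      μ h C = ∑ x ∈ Finset.Ioo g i, μ h (C ∩ {S | S n = x}) := by
    intro n C hCm hCsub
    have hUm : MeasurableSet (⋃ x ∈ Finset.Ioo g i, {S : ℕ → ℤ | S n = x}) :=
      (Finset.Ioo g i).measurableSet_biUnion fun x _ => coord_measurable n x
    have hdiff : μ h (C \ ⋃ x ∈ Finset.Ioo g i, {S : ℕ → ℤ | S n = x}) = 0 := by
      refine measure_mono_null ?_ (hintnull n)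
      intro S hS
      refine ⟨hCsub hS.1, fun hc => ?_⟩
      exact hS.2 (Set.mem_biUnion (Finset.mem_coe.2 (Finset.mem_Ioo.2 hc)) rfl)
    have h1 : μ h (C ∩ ⋃ x ∈ Finset.Ioo g i, {S : ℕ → ℤ | S n = x})
        = ∑ x ∈ Finset.Ioo g i, μ h (C ∩ {S | S n = x}) := by
      rw [Set.inter_iUnion₂]
      refine measure_biUnion_finset ?_ fun x _ => hCm.inter (coord_measurable n x)
      intro x _ y _ hxy
      refine Set.disjoint_left.2 ?_
      rintro S ⟨_, hx⟩ ⟨_, hy⟩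
      exact hxy (hx ▸ hy ▸ rfl)
    calc μ h C = μ h (C ∩ ⋃ x ∈ Finset.Ioo g i, {S : ℕ → ℤ | S n = x})
        + μ h (C \ ⋃ x ∈ Finset.Ioo g i, {S : ℕ → ℤ | S n = x}) :=
          (measure_inter_add_diff C hUm).symm
    _ = ∑ x ∈ Finset.Ioo g i, μ h (C ∩ {S | S n = x}) := by rw [hdiff, add_zero, h1]
  -- the one-step recursion
  set F : ℕ → ℝ≥0∞ := fun n => ∑ x ∈ Finset.Ioo g i,
    ENNReal.ofReal (f V g i x) * μ h (esc g i n ∩ {S | S n = x}) with hF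
  have hFrec : ∀ n : ℕ, F (n+1) + μ h (esc g i n) ≤ F n := by
    intro n
    simp only [hF]
    have hexpand : ∀ y : ℤ, μ h (esc g i (n+1) ∩ {S | S (n+1) = y})
        = ∑ x ∈ Finset.Ioo g i,
          μ h ((esc g i (n+1) ∩ {S | S (n+1) = y}) ∩ {S | S n = x}) := by
      intro y
      exact hpart n _ ((esc_measurable g i (n+1)).inter (coord_measurable (n+1) y))
        (fun S hS => esc_anti g i (Nat.le_succ n) hS.1)
    have hzero : ∀ x y : ℤ, y ≠ x + 1 → y ≠ x - 1 →
        μ h ((esc g i (n+1) ∩ {S | S (n+1) = y}) ∩ {S | S n = x}) = 0 := by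
      intro x y hy1 hy2
      refine measure_mono_null ?_ (hstepae n)
      rintro S ⟨⟨_, hS1⟩, hS2⟩
      simp only [Set.mem_setOf_eq] at hS1 hS2 ⊢
      omega
    have hA : ∀ x : ℤ, MeasurableSet (esc g i n ∩ {S : ℕ → ℤ | S n = x}) :=
      fun x => (esc_measurable g i n).inter (coord_measurable n x)
    have hdep : ∀ (x : ℤ) (S S' : ℕ → ℤ), (∀ m ≤ n, S m = S' m) →
        (S ∈ esc g i n ∩ {S : ℕ → ℤ | S n = x}
          ↔ S' ∈ esc g i n ∩ {S : ℕ → ℤ | S n = x}) := by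
      intro x S S' hSS'
      simp only [Set.mem_inter_iff, Set.mem_setOf_eq, esc]
      constructor
      · rintro ⟨h1, h2⟩
        refine ⟨fun m hm1 hm2 => ?_, ?_⟩
        · rw [← hSS' m hm2]; exact h1 m hm1 hm2
        · rw [← hSS' n le_rfl]; exact h2
      · rintro ⟨h1, h2⟩
        refine ⟨fun m hm1 hm2 => ?_, ?_⟩
        · rw [hSS' m hm2]; exact h1 m hm1 hm2
        · rw [hSS' n le_rfl]; exact h2
    have hAx : ∀ x : ℤ, (esc g i n ∩ {S : ℕ → ℤ | S n = x}) ∩ {S : ℕ → ℤ | S n = x}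
        = esc g i n ∩ {S : ℕ → ℤ | S n = x} :=
      fun x => Set.inter_eq_left.mpr Set.inter_subset_right
    have hupB : ∀ x : ℤ, μ h ((esc g i (n+1) ∩ {S | S (n+1) = x+1}) ∩ {S | S n = x})
        ≤ ENNReal.ofReal (ω x) * μ h (esc g i n ∩ {S | S n = x}) := by
      intro x
      have heq := hup h x n _ (hA x) (hdep x)
      rw [hAx x] at heq
      refine (measure_mono ?_).trans_eq heq
      rintro S ⟨⟨hS1, hS2⟩, hS3⟩
      exact ⟨⟨esc_anti g i (Nat.le_succ n) hS1, hS3⟩, hS3, hS2⟩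
    have hdownB : ∀ x : ℤ, μ h ((esc g i (n+1) ∩ {S | S (n+1) = x-1}) ∩ {S | S n = x})
        ≤ ENNReal.ofReal (1 - ω x) * μ h (esc g i n ∩ {S | S n = x}) := by
      intro x
      have heq := hdown h x n _ (hA x) (hdep x)
      rw [hAx x] at heq
      refine (measure_mono ?_).trans_eq heq
      rintro S ⟨⟨hS1, hS2⟩, hS3⟩
      exact ⟨⟨esc_anti g i (Nat.le_succ n) hS1, hS3⟩, hS3, hS2⟩
    have hsumy : ∀ x ∈ Finset.Ioo g i,
        (∑ y ∈ Finset.Ioo g i, ENNReal.ofReal (f V g i y) *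
          μ h ((esc g i (n+1) ∩ {S | S (n+1) = y}) ∩ {S | S n = x}))
        + μ h (esc g i n ∩ {S | S n = x})
        ≤ ENNReal.ofReal (f V g i x) * μ h (esc g i n ∩ {S | S n = x}) := by
      intro x hx
      rw [Finset.mem_Ioo] at hx
      obtain ⟨hgx, hxi⟩ := hx
      obtain ⟨hω0, hω1⟩ := hω x
      have hterm : ∀ y ∈ Finset.Ioo g i,
          ENNReal.ofReal (f V g i y) *
            μ h ((esc g i (n+1) ∩ {S | S (n+1) = y}) ∩ {S | S n = x})
          ≤ (if y = x + 1 then ENNReal.ofReal (f V g i (x+1)) *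
                μ h ((esc g i (n+1) ∩ {S | S (n+1) = x+1}) ∩ {S | S n = x}) else 0)
            + (if y = x - 1 then ENNReal.ofReal (f V g i (x-1)) *
                μ h ((esc g i (n+1) ∩ {S | S (n+1) = x-1}) ∩ {S | S n = x}) else 0) := by
        intro y hy
        by_cases h1 : y = x + 1
        · subst h1
          rw [if_pos rfl, if_neg (by omega), add_zero]
        · by_cases h2 : y = x - 1
          · subst h2
            rw [if_neg h1, if_pos rfl, zero_add]
          · rw [if_neg h1, if_neg h2, hzero x y h1 h2, mul_zero, add_zero]
      have hofr : ENNReal.ofReal (f V g i x)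
          = ENNReal.ofReal (ω x) * ENNReal.ofReal (f V g i (x+1))
            + ENNReal.ofReal (1 - ω x) * ENNReal.ofReal (f V g i (x-1)) + 1 := by
        rw [← ENNReal.ofReal_mul hω0.le,
          ← ENNReal.ofReal_mul (by linarith : (0:ℝ) ≤ 1 - ω x),
          ← ENNReal.ofReal_one,
          ← ENNReal.ofReal_add (mul_nonneg hω0.le (f_nonneg _ _ _ _))
            (mul_nonneg (by linarith) (f_nonneg _ _ _ _)),
          ← ENNReal.ofReal_add
            (add_nonneg (mul_nonneg hω0.le (f_nonneg _ _ _ _))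
              (mul_nonneg (by linarith) (f_nonneg _ _ _ _))) zero_le_one,
          f_identity ω hω V hV g i x hgx hxi]
      calc (∑ y ∈ Finset.Ioo g i, ENNReal.ofReal (f V g i y) *
              μ h ((esc g i (n+1) ∩ {S | S (n+1) = y}) ∩ {S | S n = x}))
            + μ h (esc g i n ∩ {S | S n = x})
          ≤ (∑ y ∈ Finset.Ioo g i,
              ((if y = x + 1 then ENNReal.ofReal (f V g i (x+1)) *
                μ h ((esc g i (n+1) ∩ {S | S (n+1) = x+1}) ∩ {S | S n = x}) else 0)
              + (if y = x - 1 then ENNReal.ofReal (f V g i (x-1)) *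
                μ h ((esc g i (n+1) ∩ {S | S (n+1) = x-1}) ∩ {S | S n = x}) else 0)))
            + μ h (esc g i n ∩ {S | S n = x}) :=
            add_le_add_left (Finset.sum_le_sum hterm) _
      _ ≤ (ENNReal.ofReal (f V g i (x+1)) *
              μ h ((esc g i (n+1) ∩ {S | S (n+1) = x+1}) ∩ {S | S n = x})
            + ENNReal.ofReal (f V g i (x-1)) *
              μ h ((esc g i (n+1) ∩ {S | S (n+1) = x-1}) ∩ {S | S n = x}))
            + μ h (esc g i n ∩ {S | S n = x}) := by
            refine add_le_add_left ?_ _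
            rw [Finset.sum_add_distrib, Finset.sum_ite_eq' (Finset.Ioo g i) (x+1),
              Finset.sum_ite_eq' (Finset.Ioo g i) (x-1)]
            refine add_le_add ?_ ?_ <;> split_ifs <;> first | exact le_rfl | exact zero_le
      _ ≤ (ENNReal.ofReal (f V g i (x+1)) *
              (ENNReal.ofReal (ω x) * μ h (esc g i n ∩ {S | S n = x}))
            + ENNReal.ofReal (f V g i (x-1)) *
              (ENNReal.ofReal (1 - ω x) * μ h (esc g i n ∩ {S | S n = x})))
            + μ h (esc g i n ∩ {S | S n = x}) :=
            add_le_add_left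
              (add_le_add (mul_le_mul_right (hupB x) _) (mul_le_mul_right (hdownB x) _)) _
      _ = ENNReal.ofReal (f V g i x) * μ h (esc g i n ∩ {S | S n = x}) := by
            rw [hofr]; ring
    calc (∑ x ∈ Finset.Ioo g i, ENNReal.ofReal (f V g i x) *
            μ h (esc g i (n+1) ∩ {S | S (n+1) = x})) + μ h (esc g i n)
        = (∑ x ∈ Finset.Ioo g i, ∑ y ∈ Finset.Ioo g i, ENNReal.ofReal (f V g i x) *
            μ h ((esc g i (n+1) ∩ {S | S (n+1) = x}) ∩ {S | S n = y}))
          + ∑ y ∈ Finset.Ioo g i, μ h (esc g i n ∩ {S | S n = y}) := by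
          rw [hpart n (esc g i n) (esc_measurable g i n) (subset_refl _)]
          congr 1
          refine Finset.sum_congr rfl fun x _ => ?_
          rw [hexpand x, Finset.mul_sum]
    _ = ∑ y ∈ Finset.Ioo g i,
          ((∑ x ∈ Finset.Ioo g i, ENNReal.ofReal (f V g i x) *
            μ h ((esc g i (n+1) ∩ {S | S (n+1) = x}) ∩ {S | S n = y}))
          + μ h (esc g i n ∩ {S | S n = y})) := by
          rw [Finset.sum_comm, ← Finset.sum_add_distrib]
    _ ≤ ∑ y ∈ Finset.Ioo g i, ENNReal.ofReal (f V g i y) *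
            μ h (esc g i n ∩ {S | S n = y}) :=
          Finset.sum_le_sum hsumy
  have hF0 : F 0 ≤ ENNReal.ofReal (f V g i h) := by
    simp only [hF]
    have hterm : ∀ x ∈ Finset.Ioo g i,
        ENNReal.ofReal (f V g i x) * μ h (esc g i 0 ∩ {S | S 0 = x})
        ≤ if x = h then ENNReal.ofReal (f V g i h) else 0 := by
      intro x _
      by_cases hxh : x = h
      · rw [if_pos hxh, hxh]
        calc ENNReal.ofReal (f V g i h) * μ h (esc g i 0 ∩ {S | S 0 = h})
            ≤ ENNReal.ofReal (f V g i h) * 1 := mul_le_mul_right prob_le_one _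
        _ = ENNReal.ofReal (f V g i h) := mul_one _
      · rw [if_neg hxh]
        have h0 : μ h (esc g i 0 ∩ {S | S 0 = x}) = 0 := by
          refine measure_mono_null ?_ hstartae
          intro S hS hc
          exact hxh (hS.2.symm.trans hc)
        rw [h0, mul_zero]
    calc (∑ x ∈ Finset.Ioo g i,
          ENNReal.ofReal (f V g i x) * μ h (esc g i 0 ∩ {S | S 0 = x}))
        ≤ ∑ x ∈ Finset.Ioo g i, if x = h then ENNReal.ofReal (f V g i h) else 0 :=
          Finset.sum_le_sum hterm
    _ = if h ∈ Finset.Ioo g i then ENNReal.ofReal (f V g i h) else 0 :=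
          Finset.sum_ite_eq' _ _ _
    _ ≤ ENNReal.ofReal (f V g i h) := by
          rw [if_pos (Finset.mem_Ioo.2 ⟨hgh, hhi⟩)]
  have hFN : ∀ N : ℕ, (∑ m ∈ Finset.range N, μ h (esc g i m)) + F N ≤ F 0 := by
    intro N
    induction N with
    | zero => simp
    | succ N ih =>
      calc (∑ m ∈ Finset.range (N+1), μ h (esc g i m)) + F (N+1)
          = (∑ m ∈ Finset.range N, μ h (esc g i m)) + (F (N+1) + μ h (esc g i N)) := by
            rw [Finset.sum_range_succ]; ring
      _ ≤ (∑ m ∈ Finset.range N, μ h (esc g i m)) + F N := add_le_add_right (hFrec N) _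
      _ ≤ F 0 := ih
  have htsum : (∑' m : ℕ, μ h (esc g i m)) ≤ ENNReal.ofReal (f V g i h) := by
    rw [ENNReal.tsum_eq_iSup_nat]
    exact iSup_le fun N => ((le_add_right le_rfl).trans (hFN N)).trans hF0
  calc (∫⁻ S, exitTime g i S ∂(μ h))
      ≤ ∫⁻ S, ∑' m : ℕ, (esc g i m).indicator (fun _ => (1:ℝ≥0∞)) S ∂(μ h) :=
        lintegral_mono (exitTime_le_tsum g i)
  _ = ∑' m : ℕ, ∫⁻ S, (esc g i m).indicator (fun _ => (1:ℝ≥0∞)) S ∂(μ h) :=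
        lintegral_tsum fun m =>
          ((measurable_const.indicator (esc_measurable g i m)).aemeasurable)
  _ = ∑' m : ℕ, μ h (esc g i m) := by
        refine tsum_congr fun m => ?_
        exact lintegral_indicator_one (esc_measurable g i m)
  _ ≤ ENNReal.ofReal (f V g i h) := htsum


end Stmt18Aux

/-- Quenched expected exit time bound: for the walk started at `h` with `g < h < i`,
`E_ω^h[τ(g) ∧ τ(i)] ≤ Σ_{k=h}^{i−1} Σ_{l=g}^{k} (1 + e^{V l − V (l−1)}) e^{V k − V l}`,
and consequently `E_ω^h[τ(g) ∧ τ(i)] ≤ 2 (i−g+1)² e^{2M}` where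
`M ≥ max_{g−1 ≤ l ≤ k ≤ i−1} (V k − V l)`. -/
theorem stmt18 (ω : ℤ → ℝ) (hω : ∀ i, ω i ∈ Set.Ioo (0 : ℝ) 1)
    (μ : ℤ → Measure (ℕ → ℤ)) (hprob : ∀ x, IsProbabilityMeasure (μ x))
    (hstart : ∀ x : ℤ, μ x {S | S 0 = x} = 1)
    (hup : ∀ (x i : ℤ) (n : ℕ) (A : Set (ℕ → ℤ)), MeasurableSet A →
      (∀ S S' : ℕ → ℤ, (∀ m ≤ n, S m = S' m) → (S ∈ A ↔ S' ∈ A)) →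
      μ x (A ∩ {S | S n = i ∧ S (n + 1) = i + 1})
        = ENNReal.ofReal (ω i) * μ x (A ∩ {S | S n = i}))
    (hdown : ∀ (x i : ℤ) (n : ℕ) (A : Set (ℕ → ℤ)), MeasurableSet A →
      (∀ S S' : ℕ → ℤ, (∀ m ≤ n, S m = S' m) → (S ∈ A ↔ S' ∈ A)) →
      μ x (A ∩ {S | S n = i ∧ S (n + 1) = i - 1})
        = ENNReal.ofReal (1 - ω i) * μ x (A ∩ {S | S n = i}))
    (V : ℤ → ℝ) (hV0 : V 0 = 0)
    (hV : ∀ k : ℤ, V k - V (k - 1) = Real.log ((1 - ω k) / ω k))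
    (g h i : ℤ) (hgh : g < h) (hhi : h < i) :
    (∫⁻ S, exitTime g i S ∂(μ h))
        ≤ ENNReal.ofReal (∑ k ∈ Finset.Icc h (i - 1), ∑ l ∈ Finset.Icc g k,
            (1 + Real.exp (V l - V (l - 1))) * Real.exp (V k - V l))
    ∧ ∀ M : ℝ, 0 ≤ M → (∀ l k : ℤ, g - 1 ≤ l → l ≤ k → k ≤ i - 1 → V k - V l ≤ M) →
        (∫⁻ S, exitTime g i S ∂(μ h))
          ≤ ENNReal.ofReal (2 * ((i : ℝ) - (g : ℝ) + 1) ^ 2 * Real.exp (2 * M)) := by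
  have hkey := Stmt18Aux.key ω hω μ hprob hstart hup hdown V hV g h i hgh hhi
  constructor
  · have hf : Stmt18Aux.f V g i h = ∑ k ∈ Finset.Icc h (i - 1), ∑ l ∈ Finset.Icc g k,
        (1 + Real.exp (V l - V (l - 1))) * Real.exp (V k - V l) := rfl
    rw [← hf]
    exact hkey
  · intro M hM0 hM
    exact hkey.trans (ENNReal.ofReal_le_ofReal
      (Stmt18Aux.f_le_bound V g h i hgh hhi M hM0 hM))
end
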